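/- The product of the minimal Fisher information (6 − 2√6)·μ of the superposition √(p_min)·ψ_0 + √(1−p_min)·ψ_2 (with p_min = 1/2 + 1/√6) and its risk μ^{−1}·(3/2 − 1/√6) equals 11 − 4√6, and 11 − 4√6 > 1; hence at fixed risk this superposition carries more Fisher information than the ground state, for which I_F[ψ_0] · risk(ψ_0) = 1. -/
import Mathlib


open Real

theorem stmt_12 (μ : ℝ) (hμ : 0 < μ) :
    ((6 - 2 * Real.sqrt 6) * μ) * (μ⁻¹ * (3 / 2 - 1 / Real.sqrt 6)) = 11 - 4 * Real.sqrt 6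
    ∧ (1 : ℝ) < 11 - 4 * Real.sqrt 6
    ∧ (2 * μ) * ((2 * μ)⁻¹) = 1 := by
  have h6 : Real.sqrt 6 ^ 2 = 6 := Real.sq_sqrt (by norm_num)
  have h6pos : 0 < Real.sqrt 6 := Real.sqrt_pos.mpr (by norm_num)
  have h6lt : Real.sqrt 6 < 5/2 := by
    nlinarith [h6]
  refine ⟨?_, by nlinarith, ?_⟩
  · field_simp
    nlinarith [h6]
  · exact mul_inv_cancel₀ (by positivity)
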